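/- Let A, B, C ∈ ℝ^{n×n} with C invertible. If σ_max(|B|) < σ_min(AC⁻¹), then for every F ∈ ℝ^{n×n} the new generalized absolute value matrix equation AX + B|CX| = F has exactly one solution X ∈ ℝ^{n×n}. -/

import Mathlib

open Matrix Pointwise

/-- Componentwise absolute value of a real matrix. -/
noncomputable def matAbs {n : ℕ} (M : Matrix (Fin n) (Fin n) ℝ) : Matrix (Fin n) (Fin n) ℝ :=
  fun i j => |M i j|

/-- Largest singular value: the square root of the largest eigenvalue of MᵀM. -/
noncomputable def sigmaMax {n : ℕ} (M : Matrix (Fin n) (Fin n) ℝ) : ℝ :=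
  Real.sqrt (sSup (spectrum ℝ (Mᵀ * M)))

/-- Smallest singular value: the square root of the smallest eigenvalue of MᵀM. -/
noncomputable def sigmaMin {n : ℕ} (M : Matrix (Fin n) (Fin n) ℝ) : ℝ :=
  Real.sqrt (sInf (spectrum ℝ (Mᵀ * M)))

namespace NGAVME

variable {n : ℕ}

lemma rayleigh_lb (S : Matrix (Fin n) (Fin n) ℝ) (hS : S.IsHermitian) (c : ℝ)
    (hc : ∀ μ ∈ spectrum ℝ S, c ≤ μ) (x : Fin n → ℝ) :
    c * (x ⬝ᵥ x) ≤ x ⬝ᵥ (S *ᵥ x) := by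
  set S' := S - algebraMap ℝ (Matrix (Fin n) (Fin n) ℝ) c with hS'def
  have hH : S'.IsHermitian := by
    refine hS.sub ?_
    rw [algebraMap_eq_diagonal]
    exact isHermitian_diagonal _
  have hspec : spectrum ℝ S' = spectrum ℝ S - {c} := by
    exact (spectrum.sub_singleton_eq S c).symm
  have hpsd : S'.PosSemidef := by
    refine hH.posSemidef_iff_eigenvalues_nonneg.mpr fun i => show (0:ℝ) ≤ hH.eigenvalues i from ?_
    have hmem : hH.eigenvalues i ∈ spectrum ℝ S' := hH.eigenvalues_mem_spectrum_real i
    rw [hspec] at hmem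
    obtain ⟨a, ha, b, hb, hab⟩ := Set.mem_sub.mp hmem
    simp only [Set.mem_singleton_iff] at hb
    subst hb; rw [← hab]; linarith [hc a ha]
  have h2 := hpsd.dotProduct_mulVec_nonneg x
  simp only [star_trivial] at h2
  have hmv : S' *ᵥ x = S *ᵥ x - c • x := by
    rw [hS'def, sub_mulVec, algebraMap_eq_diagonal]
    congr 1
    ext i
    simp [mulVec_diagonal]
  rw [hmv, dotProduct_sub, dotProduct_smul] at h2
  simp only [smul_eq_mul] at h2
  linarith

lemma rayleigh_ub (S : Matrix (Fin n) (Fin n) ℝ) (hS : S.IsHermitian) (c : ℝ)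
    (hc : ∀ μ ∈ spectrum ℝ S, μ ≤ c) (x : Fin n → ℝ) :
    x ⬝ᵥ (S *ᵥ x) ≤ c * (x ⬝ᵥ x) := by
  set S' := algebraMap ℝ (Matrix (Fin n) (Fin n) ℝ) c - S with hS'def
  have hH : S'.IsHermitian := by
    refine IsHermitian.sub ?_ hS
    rw [algebraMap_eq_diagonal]
    exact isHermitian_diagonal _
  have hspec : spectrum ℝ S' = {c} - spectrum ℝ S := by
    exact (spectrum.singleton_sub_eq S c).symm
  have hpsd : S'.PosSemidef := by
    refine hH.posSemidef_iff_eigenvalues_nonneg.mpr fun i => show (0:ℝ) ≤ hH.eigenvalues i from ?_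
    have hmem : hH.eigenvalues i ∈ spectrum ℝ S' := hH.eigenvalues_mem_spectrum_real i
    rw [hspec] at hmem
    obtain ⟨a, ha, b, hb, hab⟩ := Set.mem_sub.mp hmem
    simp only [Set.mem_singleton_iff] at ha
    subst ha; rw [← hab]; linarith [hc b hb]
  have h2 := hpsd.dotProduct_mulVec_nonneg x
  simp only [star_trivial] at h2
  have hmv : S' *ᵥ x = c • x - S *ᵥ x := by
    rw [hS'def, sub_mulVec, algebraMap_eq_diagonal]
    congr 1
    ext i
    simp [mulVec_diagonal]
  rw [hmv, dotProduct_sub, dotProduct_smul] at h2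
  simp only [smul_eq_mul] at h2
  linarith

lemma herm_tmul (M : Matrix (Fin n) (Fin n) ℝ) : (Mᵀ * M).IsHermitian := by
  have : Mᵀ = Mᴴ := by
    ext i j; simp [conjTranspose_apply]
  rw [this]
  exact isHermitian_conjTranspose_mul_self M

lemma spec_nonneg (M : Matrix (Fin n) (Fin n) ℝ) :
    ∀ μ ∈ spectrum ℝ (Mᵀ * M), 0 ≤ μ := by
  intro μ hμ
  have hT : Mᵀ = Mᴴ := by ext i j; simp [conjTranspose_apply]
  have hpsd : (Mᵀ * M).PosSemidef := by
    rw [hT]; exact posSemidef_conjTranspose_mul_self M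
  rw [(herm_tmul M).spectrum_real_eq_range_eigenvalues] at hμ
  obtain ⟨i, hi⟩ := hμ
  rw [← hi]
  exact hpsd.eigenvalues_nonneg i

lemma dot_tmul (M : Matrix (Fin n) (Fin n) ℝ) (x : Fin n → ℝ) :
    x ⬝ᵥ ((Mᵀ * M) *ᵥ x) = (M *ᵥ x) ⬝ᵥ (M *ᵥ x) := by
  rw [← mulVec_mulVec, dotProduct_mulVec, vecMul_transpose]

lemma sigmaMin_sq_le (M : Matrix (Fin n) (Fin n) ℝ) (x : Fin n → ℝ) :
    sigmaMin M ^ 2 * (x ⬝ᵥ x) ≤ (M *ᵥ x) ⬝ᵥ (M *ᵥ x) := by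
  have h0 : 0 ≤ sInf (spectrum ℝ (Mᵀ * M)) :=
    Real.sInf_nonneg (fun μ hμ => spec_nonneg M μ hμ)
  have hsq : sigmaMin M ^ 2 = sInf (spectrum ℝ (Mᵀ * M)) := Real.sq_sqrt h0
  rw [hsq, ← dot_tmul]
  refine rayleigh_lb _ (herm_tmul M) _ (fun μ hμ => ?_) x
  exact csInf_le (Matrix.finite_real_spectrum.bddBelow) hμ

lemma sigmaMax_sq_ge (M : Matrix (Fin n) (Fin n) ℝ) (x : Fin n → ℝ) :
    (M *ᵥ x) ⬝ᵥ (M *ᵥ x) ≤ sigmaMax M ^ 2 * (x ⬝ᵥ x) := by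
  have h0 : 0 ≤ sSup (spectrum ℝ (Mᵀ * M)) := by
    rcases (spectrum ℝ (Mᵀ * M)).eq_empty_or_nonempty with he | hne
    · simp [he, Real.sSup_empty]
    · obtain ⟨μ, hμ⟩ := hne
      exact le_trans (spec_nonneg M μ hμ) (le_csSup Matrix.finite_real_spectrum.bddAbove hμ)
  have hsq : sigmaMax M ^ 2 = sSup (spectrum ℝ (Mᵀ * M)) := Real.sq_sqrt h0
  rw [hsq, ← dot_tmul]
  refine rayleigh_ub _ (herm_tmul M) _ (fun μ hμ => ?_) x
  exact le_csSup (Matrix.finite_real_spectrum.bddAbove) hμ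

lemma absB_bound (B : Matrix (Fin n) (Fin n) ℝ) (u w : Fin n → ℝ)
    (huw : ∀ i, |u i| ≤ |w i|) :
    (B *ᵥ u) ⬝ᵥ (B *ᵥ u) ≤ sigmaMax (matAbs B) ^ 2 * (w ⬝ᵥ w) := by
  set aw : Fin n → ℝ := fun i => |w i| with haw
  have hcomp : ∀ i, |(B *ᵥ u) i| ≤ ((matAbs B) *ᵥ aw) i := by
    intro i
    calc |(B *ᵥ u) i| = |∑ j, B i j * u j| := rfl
      _ ≤ ∑ j, |B i j * u j| := Finset.abs_sum_le_sum_abs _ _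
      _ ≤ ∑ j, |B i j| * |w j| := by
          refine Finset.sum_le_sum fun j _ => ?_
          rw [abs_mul]
          exact mul_le_mul_of_nonneg_left (huw j) (abs_nonneg _)
      _ = ((matAbs B) *ᵥ aw) i := rfl
  have h1 : (B *ᵥ u) ⬝ᵥ (B *ᵥ u) ≤ ((matAbs B) *ᵥ aw) ⬝ᵥ ((matAbs B) *ᵥ aw) := by
    refine Finset.sum_le_sum fun i _ => ?_
    have := hcomp i
    calc (B *ᵥ u) i * (B *ᵥ u) i = |(B *ᵥ u) i| * |(B *ᵥ u) i| := (abs_mul_abs_self _).symm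
      _ ≤ ((matAbs B) *ᵥ aw) i * ((matAbs B) *ᵥ aw) i :=
          mul_self_le_mul_self (abs_nonneg _) this
  have h2 := sigmaMax_sq_ge (matAbs B) aw
  have h3 : aw ⬝ᵥ aw = w ⬝ᵥ w := by
    refine Finset.sum_congr rfl fun i _ => ?_
    simp [haw, abs_mul_abs_self]
  rw [h3] at h2
  exact h1.trans h2

lemma dot_self_nonneg (v : Fin n → ℝ) : 0 ≤ v ⬝ᵥ v :=
  Finset.sum_nonneg fun i _ => mul_self_nonneg _

lemma euc_norm_eq (v : EuclideanSpace ℝ (Fin n)) :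
    ‖v‖ = Real.sqrt ((v : Fin n → ℝ) ⬝ᵥ (v : Fin n → ℝ)) := by
  rw [EuclideanSpace.norm_eq]
  congr 1
  refine Finset.sum_congr rfl fun i _ => ?_
  simp [dotProduct, Real.norm_eq_abs, sq_abs, pow_two]

/-- The per-column AVE `D y + B |y| = f` has a unique solution. -/
lemma col_unique (D B : Matrix (Fin n) (Fin n) ℝ)
    (h : sigmaMax (matAbs B) < sigmaMin D) (f : Fin n → ℝ) :
    ∃! y : Fin n → ℝ, D *ᵥ y + B *ᵥ (fun i => |y i|) = f := by
  set σM := sigmaMax (matAbs B) with hσM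
  set σm := sigmaMin D with hσm
  have hσM0 : 0 ≤ σM := Real.sqrt_nonneg _
  have hσm0 : 0 < σm := lt_of_le_of_lt hσM0 h
  -- D is invertible
  have hdet : IsUnit D.det := by
    by_contra hd
    have hd0 : D.det = 0 := by
      simpa [isUnit_iff_ne_zero] using hd
    obtain ⟨v, hv0, hv⟩ := (Matrix.exists_mulVec_eq_zero_iff).mpr hd0
    have := sigmaMin_sq_le D v
    rw [hv] at this
    simp only [zero_dotProduct] at this
    have hvpos : 0 < v ⬝ᵥ v := by
      rcases lt_or_eq_of_le (dot_self_nonneg v) with hp | hp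
      · exact hp
      · exact absurd ((dotProduct_self_eq_zero).mp hp.symm) hv0
    rw [← hσm] at this
    have hsq : (0:ℝ) < σm ^ 2 := by positivity
    nlinarith [this, hvpos, hsq]
  have hDDinv : D * D⁻¹ = 1 := mul_nonsing_inv D hdet
  have hDinvD : D⁻¹ * D = 1 := nonsing_inv_mul D hdet
  -- the contraction
  set T : EuclideanSpace ℝ (Fin n) → EuclideanSpace ℝ (Fin n) :=
    fun y => WithLp.toLp 2 (D⁻¹ *ᵥ (f - B *ᵥ fun i => |y i|) : Fin n → ℝ) with hT
  have key : ∀ y₁ y₂ : EuclideanSpace ℝ (Fin n),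
      dist (T y₁) (T y₂) ≤ (σM / σm) * dist y₁ y₂ := by
    intro y₁ y₂
    set u : Fin n → ℝ := (fun i => |y₂ i|) - (fun i => |y₁ i|) with hu
    set w : Fin n → ℝ := (y₁ : Fin n → ℝ) - (y₂ : Fin n → ℝ) with hw
    have hsub : (T y₁ : Fin n → ℝ) - (T y₂ : Fin n → ℝ) = D⁻¹ *ᵥ (B *ᵥ u) := by
      show D⁻¹ *ᵥ (f - B *ᵥ fun i => |y₁ i|) - D⁻¹ *ᵥ (f - B *ᵥ fun i => |y₂ i|)
          = D⁻¹ *ᵥ (B *ᵥ u)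
      rw [← mulVec_sub, show (f - B *ᵥ fun i => |y₁ i|) - (f - B *ᵥ fun i => |y₂ i|)
          = (B *ᵥ fun i => |y₂ i|) - (B *ᵥ fun i => |y₁ i|) by abel, ← mulVec_sub, hu]
    have huw : ∀ i, |u i| ≤ |w i| := by
      intro i
      have : u i = |y₂ i| - |y₁ i| := rfl
      rw [this]
      have : w i = y₁ i - y₂ i := rfl
      rw [this, abs_sub_comm (y₁ i)]
      exact abs_abs_sub_abs_le_abs_sub _ _
    -- squared bounds
    have hB : (B *ᵥ u) ⬝ᵥ (B *ᵥ u) ≤ σM ^ 2 * (w ⬝ᵥ w) := absB_bound B u w huw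
    set z := B *ᵥ u with hz
    set x := D⁻¹ *ᵥ z with hx
    have hDx : D *ᵥ x = z := by
      rw [hx, mulVec_mulVec, hDDinv, one_mulVec]
    have hlow := sigmaMin_sq_le D x
    rw [hDx, ← hσm] at hlow
    -- x ⬝ᵥ x ≤ (σM/σm)^2 * (w ⬝ᵥ w)
    have hσm2 : (0:ℝ) < σm ^ 2 := by positivity
    have hxx : x ⬝ᵥ x ≤ (σM / σm) ^ 2 * (w ⬝ᵥ w) := by
      have h1 : σm ^ 2 * (x ⬝ᵥ x) ≤ σM ^ 2 * (w ⬝ᵥ w) := le_trans hlow hB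
      rw [div_pow, div_mul_eq_mul_div, le_div_iff₀ hσm2]
      nlinarith [h1]
    -- convert to distances
    have hd1 : dist (T y₁) (T y₂) = Real.sqrt (x ⬝ᵥ x) := by
      rw [dist_eq_norm, euc_norm_eq]
      congr 1
      rw [WithLp.ofLp_sub, hsub]
    have hd2 : dist y₁ y₂ = Real.sqrt (w ⬝ᵥ w) := by
      rw [dist_eq_norm, euc_norm_eq, WithLp.ofLp_sub]
    rw [hd1, hd2]
    have hrw : (σM / σm) * Real.sqrt (w ⬝ᵥ w)
        = Real.sqrt ((σM / σm) ^ 2 * (w ⬝ᵥ w)) := by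
      rw [Real.sqrt_mul (by positivity), Real.sqrt_sq (by positivity)]
    rw [hrw]
    exact Real.sqrt_le_sqrt hxx
  -- contraction
  set K : NNReal := Real.toNNReal (σM / σm) with hK
  have hKcoe : (K : ℝ) = σM / σm := Real.coe_toNNReal _ (by positivity)
  have hlip : LipschitzWith K T := LipschitzWith.of_dist_le_mul (by
    intro y₁ y₂
    rw [hKcoe]
    exact key y₁ y₂)
  have hcontr : ContractingWith K T := by
    constructor
    · rw [← NNReal.coe_lt_coe, hKcoe, NNReal.coe_one]
      exact (div_lt_one hσm0).mpr h
    · exact hlip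
  -- fixed points ↔ solutions
  have hiff : ∀ y : Fin n → ℝ,
      (D *ᵥ y + B *ᵥ (fun i => |y i|) = f) ↔ Function.IsFixedPt T (WithLp.toLp 2 y) := by
    intro y
    constructor
    · intro hy
      show T (WithLp.toLp 2 y) = WithLp.toLp 2 y
      have hDy : D *ᵥ y = f - B *ᵥ (fun i => |y i|) := by
        rw [← hy]; abel
      show WithLp.toLp 2 (D⁻¹ *ᵥ (f - B *ᵥ fun i => |y i|) : Fin n → ℝ) = WithLp.toLp 2 y
      rw [← hDy, mulVec_mulVec, hDinvD, one_mulVec]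
    · intro hy
      have hy' : (D⁻¹ *ᵥ (f - B *ᵥ fun i => |y i|) : Fin n → ℝ) = y := congrArg WithLp.ofLp hy
      have := congrArg (fun v => D *ᵥ v) hy'
      simp only [mulVec_mulVec, hDDinv, one_mulVec] at this
      rw [← this]
      abel
  have : Nonempty (EuclideanSpace ℝ (Fin n)) := ⟨0⟩
  refine ⟨(ContractingWith.fixedPoint T hcontr : EuclideanSpace ℝ (Fin n)).ofLp, ?_, ?_⟩
  · exact (hiff _).mpr (ContractingWith.fixedPoint_isFixedPt hcontr)
  · intro y hy
    exact congrArg WithLp.ofLp (ContractingWith.fixedPoint_unique hcontr ((hiff y).mp hy))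

/-- Matrix-level AVE `D Y + B |Y| = F` has a unique solution. -/
lemma mat_unique (D B : Matrix (Fin n) (Fin n) ℝ)
    (h : sigmaMax (matAbs B) < sigmaMin D) (F : Matrix (Fin n) (Fin n) ℝ) :
    ∃! Y : Matrix (Fin n) (Fin n) ℝ, D * Y + B * matAbs Y = F := by
  have hcol := fun g => col_unique D B h g
  choose sol hsol husol using fun g => (hcol g)
  have hentry : ∀ (Y : Matrix (Fin n) (Fin n) ℝ),
      D * Y + B * matAbs Y = F ↔
        ∀ j, D *ᵥ (fun i => Y i j) + B *ᵥ (fun i => |Y i j|) = (fun i => F i j) := by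
    intro Y
    constructor
    · intro hY j
      funext i
      have := congrFun (congrFun hY i) j
      simpa [Matrix.add_apply, Matrix.mul_apply, mulVec, dotProduct, matAbs] using this
    · intro hY
      ext i j
      have := congrFun (hY j) i
      simpa [Matrix.add_apply, Matrix.mul_apply, mulVec, dotProduct, matAbs] using this
  refine ⟨Matrix.of fun i j => sol (fun i' => F i' j) i, ?_, ?_⟩
  · refine (hentry _).mpr fun j => ?_
    exact hsol (fun i' => F i' j)
  · intro Y hY
    replace hY := (hentry Y).mp hY
    ext i j
    have := husol (fun i' => F i' j) (fun i => Y i j) (hY j)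
    exact congrFun this i

end NGAVME

/-- If C is invertible and σ_max(|B|) < σ_min(AC⁻¹), then for every F the NGAVME
AX + B|CX| = F has exactly one solution. -/
theorem ngavme_unique_of_sigma_abs {n : ℕ} (A B C : Matrix (Fin n) (Fin n) ℝ)
    (hC : IsUnit C) (h : sigmaMax (matAbs B) < sigmaMin (A * C⁻¹)) :
    ∀ F : Matrix (Fin n) (Fin n) ℝ,
      ∃! X : Matrix (Fin n) (Fin n) ℝ, A * X + B * matAbs (C * X) = F := by
  intro F
  have hdetC : IsUnit C.det := (Matrix.isUnit_iff_isUnit_det C).mp hC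
  have hCC : C * C⁻¹ = 1 := Matrix.mul_nonsing_inv C hdetC
  have hCC' : C⁻¹ * C = 1 := Matrix.nonsing_inv_mul C hdetC
  obtain ⟨Y, hY, hYu⟩ := NGAVME.mat_unique (A * C⁻¹) B h F
  have htrans : ∀ X : Matrix (Fin n) (Fin n) ℝ,
      A * X + B * matAbs (C * X) = (A * C⁻¹) * (C * X) + B * matAbs (C * X) := by
    intro X
    congr 1
    rw [Matrix.mul_assoc, ← Matrix.mul_assoc C⁻¹, hCC', Matrix.one_mul]
  refine ⟨C⁻¹ * Y, ?_, ?_⟩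
  · show A * (C⁻¹ * Y) + B * matAbs (C * (C⁻¹ * Y)) = F
    rw [htrans]
    have hCY : C * (C⁻¹ * Y) = Y := by
      rw [← Matrix.mul_assoc, hCC, Matrix.one_mul]
    rw [hCY]
    exact hY
  · intro X hX
    replace hX : A * X + B * matAbs (C * X) = F := hX
    rw [htrans] at hX
    have := hYu (C * X) hX
    rw [← this, ← Matrix.mul_assoc, hCC', Matrix.one_mul]
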